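/- Let G be a group, regarded as a discrete monoidal category (objects are the elements of G, only identity arrows, tensor product given by group multiplication). Let M be a monoidal category whose underlying category is a groupoid, and let F: G → M be a monoidal functor, with structure isomorphisms ε: 𝟙_M ≅ F(1) and μ_{g,g'}: F(g) ⊗ F(g') ≅ F(g g'). Let H be the set of pairs (g, φ) where g ∈ G and φ: 𝟙_M ≅ F(g) is an isomorphism in M. Then the operation (g, φ)·(g', ψ) := (g g', (φ ⊗ ψ) ≫ μ_{g,g'}) makes H into a group, whose identity element is (1, ε), such that the projection H → G, (g, φ) ↦ g, is a group homomorphism whose kernel is isomorphic as a group to Aut_M(𝟙_M). -/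

import Mathlib

open CategoryTheory MonoidalCategory

section Aux

variable {G : Type*} [Group G] {M : Type*} [Groupoid M] [MonoidalCategory M]
  (F : Discrete G ⥤ M) [F.Monoidal]

open Functor.LaxMonoidal Functor.Monoidal

set_option linter.unusedSectionVars false

lemma GSP.map_eq {X Y : Discrete G} (f : X ⟶ Y) (h : X = Y) :
    F.map f = eqToHom (congrArg F.obj h) := by
  have : f = eqToHom h := Subsingleton.elim _ _
  rw [this, eqToHom_map]

lemma GSP.comp_eqToHom_eqToHom {C : Type*} [Category C] {A X Y : C} (f : A ⟶ X) (p : X = Y)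
    (q : Y = X) : f ≫ eqToHom p ≫ eqToHom q = f := by simp

local notation "H" => Σ g : G, 𝟙_ M ≅ F.obj (Discrete.mk g)

lemma GSP.dmk {g g' : G} (h : g = g') : Discrete.mk g = Discrete.mk g' := by rw [h]

lemma GSP.H_ext {a b : H} (h1 : a.1 = b.1)
    (h2 : a.2.hom ≫ eqToHom (congrArg F.obj (GSP.dmk h1)) = b.2.hom) : a = b := by
  obtain ⟨g, φ⟩ := a; obtain ⟨g', ψ⟩ := b
  dsimp at h1; subst h1
  simp only [eqToHom_refl, Category.comp_id] at h2
  exact congrArg _ (Iso.ext h2)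

def GSP.hmul (a b : H) : H :=
  ⟨a.1 * b.1, (λ_ (𝟙_ M)).symm ≪≫ (a.2 ⊗ᵢ b.2) ≪≫ μIso F (Discrete.mk a.1) (Discrete.mk b.1)⟩

def GSP.hone : H := ⟨1, εIso F⟩

def GSP.hinv (a : H) : H :=
  ⟨a.1⁻¹, εIso F ≪≫ eqToIso (congrArg F.obj (GSP.dmk (inv_mul_cancel a.1).symm)) ≪≫
    (μIso F (Discrete.mk a.1⁻¹) (Discrete.mk a.1)).symm ≪≫
    whiskerLeftIso (F.obj (Discrete.mk a.1⁻¹)) a.2.symm ≪≫ ρ_ _⟩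

lemma GSP.hmul_assoc (a b c : H) : GSP.hmul F (GSP.hmul F a b) c = GSP.hmul F a (GSP.hmul F b c) := by
  apply GSP.H_ext F (mul_assoc _ _ _)
  obtain ⟨x, φ⟩ := a; obtain ⟨y, ψ⟩ := b; obtain ⟨z, χ⟩ := c
  dsimp [GSP.hmul]
  have hα : μ F (Discrete.mk (x*y)) (Discrete.mk z) ≫
      eqToHom (congrArg F.obj (GSP.dmk (mul_assoc x y z))) =
      μ F (Discrete.mk x ⊗ Discrete.mk y) (Discrete.mk z) ≫
        F.map (α_ (Discrete.mk x) (Discrete.mk y) (Discrete.mk z)).hom := by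
    rw [GSP.map_eq F _ (GSP.dmk (mul_assoc x y z))]; rfl
  simp only [tensorIso_hom, Iso.trans_hom, Iso.symm_hom, μIso_hom, Category.assoc, hα,
    MonoidalCategory.tensorHom_def, comp_whiskerRight, MonoidalCategory.whiskerLeft_comp]
  rw [← whisker_exchange_assoc, Functor.LaxMonoidal.associativity]
  have : μ F (Discrete.mk x) (Discrete.mk y ⊗ Discrete.mk z) =
      μ F (Discrete.mk x) (Discrete.mk (y*z)) := rfl
  rw [this]
  coherence

lemma GSP.one_hmul (a : H) : GSP.hmul F (GSP.hone F) a = a := by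
  apply GSP.H_ext F (one_mul _)
  obtain ⟨x, φ⟩ := a
  dsimp [GSP.hmul, GSP.hone]
  simp only [Iso.trans_hom, Iso.symm_hom, tensorIso_hom, μIso_hom, εIso_hom]
  have h : (ε F ⊗ₘ φ.hom) = 𝟙_ M ◁ φ.hom ≫ ε F ▷ F.obj (Discrete.mk x) := by
    simp [tensorHom_def']
  have hμ : μ F (Discrete.mk (1:G)) (Discrete.mk x) = μ F (𝟙_ (Discrete G)) (Discrete.mk x) := rfl
  rw [h, hμ]
  simp only [Category.assoc]
  rw [← leftUnitor_inv_naturality_assoc, left_unitality_inv_assoc,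
    GSP.map_eq F _ (GSP.dmk (one_mul x).symm)]
  exact GSP.comp_eqToHom_eqToHom _ _ _

lemma GSP.inv_hmul (a : H) : GSP.hmul F (GSP.hinv F a) a = GSP.hone F := by
  apply GSP.H_ext F (inv_mul_cancel _)
  obtain ⟨x, φ⟩ := a
  dsimp [GSP.hmul, GSP.hone, GSP.hinv]
  simp only [tensorIso_hom, Iso.trans_hom, Iso.symm_hom, μIso_hom, μIso_inv, whiskerLeftIso_hom,
    Iso.symm_inv, eqToIso.hom, Category.assoc, εIso_hom, MonoidalCategory.tensorHom_def]
  rw [unitors_inv_equal, ← rightUnitor_inv_naturality_assoc]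
  simp
  exact GSP.comp_eqToHom_eqToHom _ _ _

/-- The group structure. -/
def GSP.hGroup : Group H :=
  letI : Mul H := ⟨GSP.hmul F⟩
  letI : One H := ⟨GSP.hone F⟩
  letI : Inv H := ⟨GSP.hinv F⟩
  Group.ofLeftAxioms (GSP.hmul_assoc F) (GSP.one_hmul F) (GSP.inv_hmul F)

lemma GSP.unit_tensor (u v : 𝟙_ M ⟶ 𝟙_ M) :
    (λ_ (𝟙_ M)).inv ≫ (u ⊗ₘ v) ≫ (λ_ (𝟙_ M)).hom = u ≫ v := by
  rw [MonoidalCategory.tensorHom_def, unitors_inv_equal]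
  simp only [Category.assoc]
  rw [← rightUnitor_inv_naturality_assoc, ← unitors_inv_equal]
  simp [leftUnitor_naturality]

lemma GSP.unit_comm (u v : 𝟙_ M ⟶ 𝟙_ M) : u ≫ v = v ≫ u := by
  rw [← GSP.unit_tensor u v, tensorHom_def']
  simp only [Category.assoc]
  rw [← leftUnitor_inv_naturality_assoc, unitors_inv_equal,
    ← rightUnitor_inv_naturality_assoc, ← unitors_inv_equal]
  simp

lemma GSP.eps_tensor :
    (ε F ⊗ₘ ε F) ≫ μ F (Discrete.mk (1:G)) (Discrete.mk (1:G)) ≫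
      eqToHom (congrArg F.obj (GSP.dmk (mul_one (1:G)))) ≫ (εIso F).inv =
      (λ_ (𝟙_ M)).hom := by
  have hc : ε F ≫ (εIso F).inv = 𝟙 (𝟙_ M) := by
    rw [← εIso_hom]; exact (εIso F).hom_inv_id
  suffices h : (ε F ⊗ₘ ε F) ≫ μ F (Discrete.mk (1:G)) (Discrete.mk (1:G)) ≫
      eqToHom (congrArg F.obj (GSP.dmk (mul_one (1:G)))) = (λ_ (𝟙_ M)).hom ≫ ε F by
    calc (ε F ⊗ₘ ε F) ≫ μ F (Discrete.mk (1:G)) (Discrete.mk (1:G)) ≫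
        eqToHom (congrArg F.obj (GSP.dmk (mul_one (1:G)))) ≫ (εIso F).inv
        = ((ε F ⊗ₘ ε F) ≫ μ F (Discrete.mk (1:G)) (Discrete.mk (1:G)) ≫
            eqToHom (congrArg F.obj (GSP.dmk (mul_one (1:G))))) ≫ (εIso F).inv := by
          simp only [Category.assoc]
      _ = ((λ_ (𝟙_ M)).hom ≫ ε F) ≫ (εIso F).inv := by rw [h]
      _ = (λ_ (𝟙_ M)).hom := by rw [Category.assoc, hc, Category.comp_id]
  have hμ : μ F (Discrete.mk (1:G)) (Discrete.mk (1:G)) =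
      μ F (Discrete.mk (1:G)) (𝟙_ (Discrete G)) := rfl
  have hρ : F.map (ρ_ (Discrete.mk (1:G))).hom =
      eqToHom (congrArg F.obj (GSP.dmk (mul_one (1:G)))) :=
    GSP.map_eq F _ (GSP.dmk (mul_one (1:G)))
  have hw : F.obj (𝟙_ (Discrete G)) ◁ ε F = F.obj (Discrete.mk (1:G)) ◁ ε F := rfl
  have hru : (ρ_ (F.obj (Discrete.mk (1:G)))).hom =
      F.obj (Discrete.mk (1:G)) ◁ ε F ≫ μ F (Discrete.mk (1:G)) (𝟙_ (Discrete G)) ≫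
        F.map (ρ_ (Discrete.mk (1:G))).hom := by
    exact Functor.LaxMonoidal.right_unitality F (Discrete.mk (1:G))
  have hnat : ε F ▷ 𝟙_ M ≫ (ρ_ (F.obj (Discrete.mk (1:G)))).hom =
      (ρ_ (𝟙_ M)).hom ≫ ε F := by exact rightUnitor_naturality (ε F)
  rw [MonoidalCategory.tensorHom_def]
  simp only [Category.assoc]
  rw [hw, hμ, ← hρ, ← hru, hnat, ← unitors_equal]

end Aux

theorem group_structure_on_pairs_of_monoidal_functor
    {G : Type*} [Group G] {M : Type*} [Groupoid M] [MonoidalCategory M]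
    (F : Discrete G ⥤ M) [F.Monoidal] :
    ∃ inst : Group (Σ g : G, 𝟙_ M ≅ F.obj (Discrete.mk g)),
      (∀ a b : Σ g : G, 𝟙_ M ≅ F.obj (Discrete.mk g),
          a * b = ⟨a.1 * b.1,
            (λ_ (𝟙_ M)).symm ≪≫ (a.2 ⊗ᵢ b.2) ≪≫
              Functor.Monoidal.μIso F (Discrete.mk a.1) (Discrete.mk b.1)⟩) ∧
      ((1 : Σ g : G, 𝟙_ M ≅ F.obj (Discrete.mk g)) = ⟨1, Functor.Monoidal.εIso F⟩) ∧
      ∃ π : (Σ g : G, 𝟙_ M ≅ F.obj (Discrete.mk g)) →* G,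
        (∀ a, π a = a.1) ∧ Nonempty (π.ker ≃* Aut (𝟙_ M)) := by
  letI inst := GSP.hGroup F
  refine ⟨inst, fun a b => rfl, rfl, MonoidHom.mk' Sigma.fst (fun a b => rfl), fun a => rfl, ⟨?_⟩⟩
  open Functor.LaxMonoidal Functor.Monoidal in
  refine
    { toFun := fun k => k.1.2 ≪≫ eqToIso (congrArg F.obj (GSP.dmk (k.2 : k.1.1 = 1))) ≪≫
        (εIso F).symm
      invFun := fun α => ⟨⟨1, α ≪≫ εIso F⟩, rfl⟩
      left_inv := ?_
      right_inv := fun α => by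
        ext : 1
        show (α.hom ≫ ε F) ≫ eqToHom rfl ≫ Functor.OplaxMonoidal.η F = α.hom
        simp
      map_mul' := ?_ }
  · rintro ⟨⟨g, φ⟩, hg⟩
    have hg' : g = 1 := hg
    subst hg'
    exact Subtype.ext (GSP.H_ext F rfl (by simp))
  · rintro ⟨⟨g, φ⟩, hg⟩ ⟨⟨g', ψ⟩, hg'⟩
    have h1 : g = 1 := hg
    have h2 : g' = 1 := hg'
    subst h1; subst h2
    ext : 1
    show ((λ_ (𝟙_ M)).symm ≪≫ (φ ⊗ᵢ ψ) ≪≫ μIso F (Discrete.mk 1) (Discrete.mk 1)).hom ≫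
        eqToHom (congrArg F.obj (GSP.dmk (mul_one (1:G)))) ≫ (εIso F).inv =
      (ψ.hom ≫ eqToHom (congrArg F.obj (GSP.dmk rfl)) ≫ (εIso F).inv) ≫
        (φ.hom ≫ eqToHom (congrArg F.obj (GSP.dmk rfl)) ≫ (εIso F).inv)
    have hφ : φ.hom = (φ.hom ≫ (εIso F).inv) ≫ ε F := by
      rw [Category.assoc, ← εIso_hom, Iso.inv_hom_id]
      exact (Category.comp_id _).symm
    have hψ : ψ.hom = (ψ.hom ≫ (εIso F).inv) ≫ ε F := by
      rw [Category.assoc, ← εIso_hom, Iso.inv_hom_id]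
      exact (Category.comp_id _).symm
    simp only [Iso.trans_hom, Iso.symm_hom, tensorIso_hom, μIso_hom, Category.assoc,
      eqToHom_refl, Category.id_comp, Category.comp_id]
    nth_rewrite 1 [hφ]
    nth_rewrite 1 [hψ]
    rw [← tensorHom_comp_tensorHom]
    simp only [Category.assoc]
    rw [GSP.eps_tensor F, GSP.unit_tensor]
    rw [GSP.unit_comm (φ.hom ≫ (εIso F).inv) (ψ.hom ≫ (εIso F).inv)]
    simp only [Category.assoc]
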